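/- Let f(z) = a_0 + a_1 z + ... + a_n z^n be a complex polynomial of degree n with |a_0| < |a_n|, and let f*(z) = conj(a_n) + conj(a_{n-1}) z + ... + conj(a_0) z^n. Then f_1(z) = (conj(a_n) f(z) - a_0 f*(z))/z is a polynomial of degree n-1, and the number of zeros of f_1 (counted with multiplicity) inside the open unit disk equals the number of zeros of f inside the open unit disk minus one. -/

import Mathlib

open Polynomial Metric Real Complex

local notation "conj'" => starRingEnd ℂ

lemma evalConj (p : Polynomial ℂ) (w : ℂ) :
    (p.map conj').eval w = conj' (p.eval (conj' w)) := by
  rw [eval_map]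
  induction p using Polynomial.induction_on with
  | C a => simp
  | add p q hp hq => simp [hp, hq]
  | monomial k a h => simp [h, mul_assoc, ← map_pow]

lemma eval_reverse (p : Polynomial ℂ) (z : ℂ) (hz : z ≠ 0) :
    p.reverse.eval z = p.eval z⁻¹ * z ^ p.natDegree := by
  have : Invertible z⁻¹ := invertibleOfNonzero (inv_ne_zero hz)
  have h := eval₂_reflect_mul_pow (RingHom.id ℂ) z⁻¹ p.natDegree p le_rfl
  rw [invOf_eq_inv, inv_inv] at h
  have hpow : (z : ℂ) ^ p.natDegree ≠ 0 := pow_ne_zero _ hz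
  rw [inv_pow] at h
  field_simp at h
  simpa [Polynomial.reverse, eval₂_eq_eval_map, Polynomial.map_id] using h.trans (mul_comm _ _)

lemma conj_inv_of_norm_one {z : ℂ} (hz : ‖z‖ = 1) : conj' z⁻¹ = z := by
  have h : z * conj' z = 1 := by
    rw [Complex.mul_conj]; norm_cast
    simp [Complex.normSq_eq_norm_sq, hz]
  have hz0 : z ≠ 0 := by rintro rfl; simp at hz
  have h2 : conj' z = z⁻¹ := eq_inv_of_mul_eq_one_left (by linear_combination h)
  rw [map_inv₀, h2, inv_inv]

lemma fstar_eval (p : Polynomial ℂ) {z : ℂ} (hz : ‖z‖ = 1) :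
    (p.map conj').reverse.eval z = z ^ p.natDegree * conj' (p.eval z) := by
  have hz0 : z ≠ 0 := by rintro rfl; simp at hz
  rw [eval_reverse _ _ hz0, evalConj, conj_inv_of_norm_one hz,
    natDegree_map_eq_of_injective (RingHom.injective _), mul_comm]

lemma fstar_norm (p : Polynomial ℂ) {z : ℂ} (hz : ‖z‖ = 1) :
    ‖(p.map conj').reverse.eval z‖ = ‖p.eval z‖ := by
  rw [fstar_eval p hz]
  simp [norm_mul, norm_pow, hz]

lemma logDeriv_prod_eval (S : Multiset ℂ) (a z : ℂ) (ha : a ≠ 0)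
    (hz : ∀ r ∈ S, z ≠ r) :
    (derivative (C a * (S.map (fun r => X - C r)).prod)).eval z
      / (C a * (S.map (fun r => X - C r)).prod).eval z
    = (S.map (fun r => (z - r)⁻¹)).sum := by
  induction S using Multiset.induction_on with
  | empty => simp
  | cons r S ih =>
    have hzr : z - r ≠ 0 := sub_ne_zero.mpr (hz r (Multiset.mem_cons_self r S))
    have hz' : ∀ s ∈ S, z ≠ s := fun s hs => hz s (Multiset.mem_cons_of_mem hs)
    have hQ : ((S.map (fun r => X - C r)).prod).eval z ≠ 0 := by
      rw [eval_multiset_prod]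
      apply Multiset.prod_ne_zero
      intro h0
      rw [Multiset.mem_map] at h0
      obtain ⟨q, hq, hq0⟩ := h0
      obtain ⟨s, hs, rfl⟩ := Multiset.mem_map.mp hq
      simp only [eval_sub, eval_X, eval_C] at hq0
      exact sub_ne_zero.mpr (hz' s hs) hq0
    have key : C a * ((r ::ₘ S).map (fun r => X - C r)).prod
        = (X - C r) * (C a * (S.map (fun r => X - C r)).prod) := by
      rw [Multiset.map_cons, Multiset.prod_cons]; ring
    rw [key, Multiset.map_cons, Multiset.sum_cons, ← ih hz']
    simp only [derivative_mul, derivative_sub, derivative_X, derivative_C, eval_add, eval_mul,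
      eval_sub, eval_X, eval_C, sub_zero, one_mul, zero_mul, zero_add, derivative_C_mul]
    field_simp

lemma circleIntegrable_inv_sub {r : ℂ} (hr : ‖r‖ ≠ 1) :
    CircleIntegrable (fun z => (z - r)⁻¹) 0 1 := by
  apply ContinuousOn.circleIntegrable zero_le_one
  apply ContinuousOn.inv₀
  · exact (continuous_sub_right r).continuousOn
  · intro z hz
    rw [mem_sphere_zero_iff_norm] at hz
    exact sub_ne_zero.mpr (by rintro rfl; exact hr hz)

lemma integral_inv_sub_single {r : ℂ} (hr : ‖r‖ ≠ 1) :
    (∮ z in C(0,1), (z - r)⁻¹) = if ‖r‖ < 1 then (2 * π * I) else 0 := by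
  rcases lt_or_gt_of_ne hr with h | h
  · rw [if_pos h]
    exact circleIntegral.integral_sub_inv_of_mem_ball (by simpa [mem_ball] using h)
  · rw [if_neg (by linarith)]
    apply Complex.circleIntegral_eq_zero_of_differentiable_on_off_countable zero_le_one
      Set.countable_empty
    · apply ContinuousOn.inv₀ (continuous_id.sub continuous_const).continuousOn
      intro z hz
      rw [mem_closedBall, dist_zero_right] at hz
      exact sub_ne_zero.mpr (by rintro rfl; simp only [id_eq] at *; linarith)
    · intro z hz
      rw [Set.diff_empty, mem_ball, dist_zero_right] at hz
      have : z - r ≠ 0 := sub_ne_zero.mpr (by rintro rfl; linarith)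
      exact (differentiable_id.sub_const r).differentiableAt.inv this

lemma my_circleIntegral_add {f g : ℂ → ℂ} {c : ℂ} {R : ℝ} (hf : CircleIntegrable f c R)
    (hg : CircleIntegrable g c R) :
    (∮ z in C(c, R), (f z + g z)) = (∮ z in C(c, R), f z) + ∮ z in C(c, R), g z := by
  simp only [circleIntegral, smul_add, intervalIntegral.integral_add hf.out hg.out]

lemma integral_multiset_sum (S : Multiset ℂ) (hS : ∀ r ∈ S, ‖r‖ ≠ 1) :
    CircleIntegrable (fun z => (S.map (fun r => (z - r)⁻¹)).sum) 0 1 ∧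
    (∮ z in C(0,1), (S.map (fun r => (z - r)⁻¹)).sum)
      = 2 * π * I * (Multiset.card (S.filter (fun r => ‖r‖ < 1)) : ℂ) := by
  induction S using Multiset.induction_on with
  | empty => simp [CircleIntegrable, circleIntegral]
  | cons r S ih =>
    have hr : ‖r‖ ≠ 1 := hS r (Multiset.mem_cons_self r S)
    have hS' : ∀ s ∈ S, ‖s‖ ≠ 1 := fun s hs => hS s (Multiset.mem_cons_of_mem hs)
    obtain ⟨ihint, ihval⟩ := ih hS'
    have hint := circleIntegrable_inv_sub hr
    constructor
    · simp only [Multiset.map_cons, Multiset.sum_cons]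
      exact hint.add ihint
    · simp only [Multiset.map_cons, Multiset.sum_cons]
      rw [my_circleIntegral_add hint ihint, ihval, integral_inv_sub_single hr,
        Multiset.filter_cons]
      by_cases h1 : ‖r‖ < 1
      · simp only [if_pos h1, Multiset.card_add, Multiset.card_singleton]
        push_cast
        ring
      · simp only [if_neg h1, Multiset.card_add]
        simp

lemma arg_principle (p : Polynomial ℂ) (hp : p ≠ 0)
    (h : ∀ z : ℂ, ‖z‖ = 1 → p.eval z ≠ 0) :
    (∮ z in C(0,1), (derivative p).eval z / p.eval z)
      = 2 * π * I * (Multiset.card (p.roots.filter (fun r => ‖r‖ < 1)) : ℂ) := by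
  have hcard : Multiset.card p.roots = p.natDegree :=
    splits_iff_card_roots.mp (IsAlgClosed.splits p)
  have hfac := C_leadingCoeff_mul_prod_multiset_X_sub_C hcard
  have hrS : ∀ r ∈ p.roots, ‖r‖ ≠ 1 := by
    intro r hr h1
    exact h r h1 ((mem_roots hp).mp hr)
  have heq : Set.EqOn (fun z => (derivative p).eval z / p.eval z)
      (fun z => (p.roots.map (fun r => (z - r)⁻¹)).sum) (sphere (0:ℂ) 1) := by
    intro z hz
    rw [mem_sphere_zero_iff_norm] at hz
    have hzr : ∀ r ∈ p.roots, z ≠ r := by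
      intro r hr hzr'
      exact hrS r hr (hzr' ▸ hz)
    have := logDeriv_prod_eval p.roots p.leadingCoeff z
      (leadingCoeff_ne_zero.mpr hp) hzr
    rw [hfac] at this
    exact this
  rw [circleIntegral.integral_congr zero_le_one heq]
  exact (integral_multiset_sum p.roots hrS).2

lemma rouche (p q : Polynomial ℂ) (h : ∀ z : ℂ, ‖z‖ = 1 → ‖q.eval z‖ < ‖p.eval z‖) :
    Multiset.card ((p - q).roots.filter (fun r => ‖r‖ < 1))
      = Multiset.card (p.roots.filter (fun r => ‖r‖ < 1)) := by
  set H : ℝ → Polynomial ℂ := fun t => p - C (t : ℂ) * q with hH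
  set N : ℝ → ℕ := fun t => Multiset.card ((H t).roots.filter (fun r => ‖r‖ < 1)) with hN
  have hsc : IsCompact (sphere (0:ℂ) 1) := isCompact_sphere 0 1
  have hsn : (sphere (0:ℂ) 1).Nonempty := NormedSpace.sphere_nonempty.mpr zero_le_one
  -- minimum of ‖p‖ - ‖q‖ on the sphere
  obtain ⟨z₀, hz₀s, hz₀⟩ := hsc.exists_isMinOn hsn
    ((continuous_norm.comp p.continuous).sub
      (continuous_norm.comp q.continuous)).continuousOn
  set c₀ : ℝ := ‖p.eval z₀‖ - ‖q.eval z₀‖ with hc₀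
  have hc₀pos : 0 < c₀ := sub_pos.mpr (h z₀ (mem_sphere_zero_iff_norm.mp hz₀s))
  have hlow : ∀ t ∈ Set.Icc (0:ℝ) 1, ∀ z ∈ sphere (0:ℂ) 1, c₀ ≤ ‖(H t).eval z‖ := by
    intro t ht z hz
    have h1 : ‖(H t).eval z‖ = ‖p.eval z - (t:ℂ) * q.eval z‖ := by
      simp [hH]
    have h2 : ‖(t:ℂ) * q.eval z‖ ≤ ‖q.eval z‖ := by
      rw [norm_mul, Complex.norm_real, Real.norm_eq_abs]
      have : |t| ≤ 1 := abs_le.mpr ⟨by linarith [ht.1], ht.2⟩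
      nlinarith [norm_nonneg (q.eval z)]
    have h3 := norm_sub_norm_le (p.eval z) ((t:ℂ) * q.eval z)
    have h4 := isMinOn_iff.mp hz₀ z hz
    simp only [Pi.sub_apply, Function.comp_apply] at h4
    rw [h1]
    linarith
  have hne : ∀ t ∈ Set.Icc (0:ℝ) 1, ∀ z : ℂ, ‖z‖ = 1 → (H t).eval z ≠ 0 := by
    intro t ht z hz
    have := hlow t ht z (mem_sphere_zero_iff_norm.mpr hz)
    intro h0
    rw [h0, norm_zero] at this
    linarith
  have hH0 : ∀ t ∈ Set.Icc (0:ℝ) 1, H t ≠ 0 := by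
    intro t ht h0
    exact hne t ht 1 (by simp) (by rw [h0]; simp)
  have hFval : ∀ t ∈ Set.Icc (0:ℝ) 1,
      (∮ z in C(0,1), (derivative (H t)).eval z / (H t).eval z)
        = 2 * π * I * (N t : ℂ) := fun t ht =>
    arg_principle (H t) (hH0 t ht) (hne t ht)
  have hcint : ∀ t ∈ Set.Icc (0:ℝ) 1,
      CircleIntegrable (fun z => (derivative (H t)).eval z / (H t).eval z) 0 1 := by
    intro t ht
    apply ContinuousOn.circleIntegrable zero_le_one
    exact ((derivative (H t)).continuous.continuousOn).div
      ((H t).continuous.continuousOn)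
      (fun z hz => hne t ht z (mem_sphere_zero_iff_norm.mp hz))
  -- bound for numerator
  obtain ⟨w₀, hw₀s, hw₀⟩ := hsc.exists_isMaxOn hsn
    (((derivative p).continuous.mul q.continuous).sub
      ((derivative q).continuous.mul p.continuous)).norm.continuousOn
  set M : ℝ := ‖(derivative p).eval w₀ * q.eval w₀ - (derivative q).eval w₀ * p.eval w₀‖
    with hM
  have hM0 : 0 ≤ M := norm_nonneg _
  set δ : ℝ := c₀^2 / (2 * (M + 1)) with hδ
  have hδpos : 0 < δ := by positivity
  -- main step
  have step : ∀ t ∈ Set.Icc (0:ℝ) 1, ∀ s ∈ Set.Icc (0:ℝ) 1, |t - s| ≤ δ → N t = N s := by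
    intro t ht s hs hts
    by_contra hne'
    have hpt : ∀ z ∈ sphere (0:ℂ) 1,
        ‖(derivative (H t)).eval z / (H t).eval z
          - (derivative (H s)).eval z / (H s).eval z‖ ≤ |t - s| * M / (c₀ * c₀) := by
      intro z hz
      have hz1 : ‖z‖ = 1 := mem_sphere_zero_iff_norm.mp hz
      have hBt : (H t).eval z ≠ 0 := hne t ht z hz1
      have hBs : (H s).eval z ≠ 0 := hne s hs z hz1
      have hdt : derivative (H t) = derivative p - C (t:ℂ) * derivative q := by
        simp [hH, derivative_sub, derivative_C_mul]
      have hds : derivative (H s) = derivative p - C (s:ℂ) * derivative q := by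
        simp [hH, derivative_sub, derivative_C_mul]
      have hid : (derivative (H t)).eval z / (H t).eval z
          - (derivative (H s)).eval z / (H s).eval z
          = ((t:ℂ) - s) * ((derivative p).eval z * q.eval z
              - (derivative q).eval z * p.eval z) / ((H t).eval z * (H s).eval z) := by
        rw [hdt, hds]
        have e1 : (H t).eval z = p.eval z - (t:ℂ) * q.eval z := by simp [hH]
        have e2 : (H s).eval z = p.eval z - (s:ℂ) * q.eval z := by simp [hH]
        rw [div_sub_div _ _ hBt hBs]
        rw [e1, e2] at *
        congr 1
        simp only [eval_sub, eval_mul, eval_C]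
        ring
      rw [hid]
      rw [norm_div, norm_mul, norm_mul]
      have hnum : ‖(derivative p).eval z * q.eval z - (derivative q).eval z * p.eval z‖
          ≤ M := isMaxOn_iff.mp hw₀ z hz
      have hts' : ‖((t:ℂ) - s)‖ = |t - s| := by
        rw [← Complex.ofReal_sub, Complex.norm_real, Real.norm_eq_abs]
      have hBtn := hlow t ht z hz
      have hBsn := hlow s hs z hz
      have hden : c₀ * c₀ ≤ ‖(H t).eval z‖ * ‖(H s).eval z‖ := by
        apply mul_le_mul hBtn hBsn hc₀pos.le (norm_nonneg _)
      rw [hts']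
      apply div_le_div₀ (by positivity) _ (by positivity) hden
      exact mul_le_mul_of_nonneg_left hnum (abs_nonneg _)
    have hdiff : (∮ z in C(0,1), ((derivative (H t)).eval z / (H t).eval z
          - (derivative (H s)).eval z / (H s).eval z))
        = 2 * π * I * ((N t : ℂ) - (N s : ℂ)) := by
      rw [circleIntegral.integral_sub (hcint t ht) (hcint s hs), hFval t ht, hFval s hs]
      ring
    have hnorm := circleIntegral.norm_integral_le_of_norm_le_const (R := 1) (c := (0:ℂ))
      zero_le_one (fun z hz => hpt z (by simpa using hz))
    rw [hdiff] at hnorm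
    have hlhs : ‖2 * (π:ℂ) * I * ((N t : ℂ) - (N s : ℂ))‖ = 2 * π * ‖((N t : ℂ) - (N s : ℂ))‖ := by
      rw [norm_mul, norm_mul, norm_mul, Complex.norm_I, Complex.norm_real,
        Real.norm_eq_abs, _root_.abs_of_nonneg Real.pi_nonneg]
      norm_num
    have hge : (1:ℝ) ≤ ‖((N t : ℂ) - (N s : ℂ))‖ := by
      have hcast : ((N t : ℂ) - (N s : ℂ)) = (((N t : ℤ) - (N s : ℤ) : ℤ) : ℂ) := by
        push_cast; ring
      rw [hcast, Complex.norm_intCast]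
      have hne2 : (N t : ℤ) - (N s : ℤ) ≠ 0 := sub_ne_zero.mpr (by exact_mod_cast hne')
      exact_mod_cast Int.one_le_abs hne2
    have hsmall : |t - s| * M / (c₀ * c₀) < 1 := by
      have h1 : |t - s| * M ≤ δ * M := mul_le_mul_of_nonneg_right hts hM0
      have h2 : δ * M < c₀ * c₀ := by
        rw [hδ]
        rw [div_mul_eq_mul_div, div_lt_iff₀ (by positivity)]
        nlinarith
      rw [div_lt_one (by positivity)]
      linarith
    rw [hlhs] at hnorm
    have : 2 * π * 1 ≤ 2 * π * ‖((N t : ℂ) - (N s : ℂ))‖ := by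
      apply mul_le_mul_of_nonneg_left hge (by positivity)
    have h2π : (0:ℝ) < 2 * π := by positivity
    nlinarith [hnorm, this]
  -- chaining
  have key : N 1 = N 0 := by
    set m : ℕ := ⌈1/δ⌉₊ + 1 with hm
    have hmpos : (0:ℝ) < m := by positivity
    have hmδ : (1:ℝ)/m ≤ δ := by
      rw [div_le_iff₀ hmpos]
      have h1 : 1/δ ≤ (m:ℝ) := by
        calc 1/δ ≤ (⌈1/δ⌉₊ : ℝ) := Nat.le_ceil _
        _ ≤ m := by exact_mod_cast Nat.le_succ _
      calc (1:ℝ) = δ * (1/δ) := by field_simp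
      _ ≤ δ * m := by nlinarith
    have claim : ∀ k : ℕ, k ≤ m → N ((k:ℝ)/m) = N 0 := by
      intro k
      induction k with
      | zero => intro _; norm_num
      | succ k ih =>
        intro hk
        have hk' : k ≤ m := Nat.le_of_succ_le hk
        rw [← ih hk']
        apply step
        · constructor
          · positivity
          · rw [div_le_one hmpos]; exact_mod_cast hk
        · constructor
          · positivity
          · rw [div_le_one hmpos]; exact_mod_cast hk'
        · have heq : ((k+1:ℕ):ℝ)/m - (k:ℝ)/m = 1/m := by
            push_cast; field_simp; ring
          rw [heq, abs_of_pos (by positivity)]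
          exact hmδ
    have h1 := claim m le_rfl
    rw [div_self (ne_of_gt hmpos)] at h1
    exact h1
  have e0 : N 0 = Multiset.card (p.roots.filter (fun r => ‖r‖ < 1)) := by
    simp [hN, hH]
  have e1 : N 1 = Multiset.card ((p - q).roots.filter (fun r => ‖r‖ < 1)) := by
    simp [hN, hH]
  rw [← e0, ← e1, key]

lemma reverse_linear (c : ℂ) : (X - C c).reverse = 1 - C c * X := by
  have h1 : (X - C c : Polynomial ℂ) = C 1 * X ^ 1 - C c * X ^ 0 := by simp
  rw [Polynomial.reverse, natDegree_X_sub_C, h1, reflect_sub, reflect_C_mul_X_pow,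
    reflect_C_mul_X_pow]
  simp [revAt_le]

lemma mul_conj_of_norm_one {w : ℂ} (hw : ‖w‖ = 1) : conj' w * w = 1 := by
  rw [mul_comm, Complex.mul_conj]
  norm_cast
  simp [Complex.normSq_eq_norm_sq, hw]

lemma norm_prod_one (B : Multiset ℂ) (hB : ∀ w ∈ B, ‖w‖ = 1) :
    ‖(B.map (fun w => -conj' w)).prod‖ = 1 := by
  induction B using Multiset.induction_on with
  | empty => simp
  | cons w B ih =>
    simp only [Multiset.map_cons, Multiset.prod_cons, norm_mul, norm_neg, RCLike.norm_conj]
    rw [hB w (Multiset.mem_cons_self w B), ih (fun s hs => hB s (Multiset.mem_cons_of_mem hs))]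
    simp

lemma rev_factor (B : Multiset ℂ) (hB : ∀ w ∈ B, ‖w‖ = 1) (h : Polynomial ℂ) (hh : h ≠ 0) :
    ((B.map (fun w => X - C (conj' w))).prod * h).reverse
      = C ((B.map (fun w => -conj' w)).prod)
        * ((B.map (fun w => X - C w)).prod * h.reverse) := by
  induction B using Multiset.induction_on with
  | empty => simp
  | cons w B ih =>
    have hw : ‖w‖ = 1 := hB w (Multiset.mem_cons_self w B)
    have hB' : ∀ s ∈ B, ‖s‖ = 1 := fun s hs => hB s (Multiset.mem_cons_of_mem hs)
    have hmono : ((B.map (fun w => X - C (conj' w))).prod).Monic :=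
      monic_multiset_prod_of_monic B (fun w => X - C (conj' w))
        (fun i _ => monic_X_sub_C _)
    have hne : (B.map (fun w => X - C (conj' w))).prod * h ≠ 0 :=
      mul_ne_zero hmono.ne_zero hh
    have hlc : (X - C (conj' w)).leadingCoeff
        * ((B.map (fun w => X - C (conj' w))).prod * h).leadingCoeff ≠ 0 := by
      rw [(monic_X_sub_C (conj' w)).leadingCoeff, one_mul]
      exact leadingCoeff_ne_zero.mpr hne
    rw [Multiset.map_cons, Multiset.prod_cons, mul_assoc, Polynomial.reverse_mul hlc, ih hB',
      reverse_linear]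
    have hfac : (1 : Polynomial ℂ) - C (conj' w) * X = C (-conj' w) * (X - C w) := by
      rw [map_neg, neg_mul, mul_sub, ← C_mul, mul_conj_of_norm_one hw, C_1]
      ring
    rw [hfac, Multiset.map_cons, Multiset.prod_cons, Multiset.map_cons, Multiset.prod_cons,
      map_mul]
    ring

/-- Cohn's rule: if `f` has degree `n` and `|a₀| < |aₙ|`, then
`f₁(z) = (conj(aₙ) f(z) - a₀ f*(z))/z` is a polynomial of degree `n-1` having exactly one
fewer zero (counted with multiplicity) in the open unit disk than `f` does. -/
theorem cohn_rule (f : Polynomial ℂ) (n : ℕ) (hn : 0 < n) (hdeg : f.natDegree = n)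
    (hlt : ‖f.coeff 0‖ < ‖f.coeff n‖) :
    ((Polynomial.C ((starRingEnd ℂ) (f.coeff n)) * f
        - Polynomial.C (f.coeff 0) * (f.map (starRingEnd ℂ)).reverse).divX).degree
      = ((n - 1 : ℕ) : WithBot ℕ) ∧
    Multiset.card
        (((Polynomial.C ((starRingEnd ℂ) (f.coeff n)) * f
            - Polynomial.C (f.coeff 0) * (f.map (starRingEnd ℂ)).reverse).divX).roots.filter
          (fun z => ‖z‖ < 1)) + 1
      = Multiset.card (f.roots.filter (fun z => ‖z‖ < 1)) := by
  set a0 : ℂ := f.coeff 0 with ha0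
  set an : ℂ := f.coeff n with han'
  set g : Polynomial ℂ := C (conj' an) * f - C a0 * (f.map conj').reverse with hg
  have hf0 : f ≠ 0 := by
    intro h0
    rw [h0, natDegree_zero] at hdeg
    omega
  have han : an ≠ 0 := by
    intro h0
    rw [h0, norm_zero] at hlt
    exact absurd hlt (norm_nonneg a0).not_gt
  have hmapne : f.map conj' ≠ 0 := by
    intro h0
    rw [Polynomial.map_eq_zero_iff (RingHom.injective _)] at h0
    exact hf0 h0
  have hmapdeg : (f.map conj').natDegree = n := by
    rw [natDegree_map_eq_of_injective (RingHom.injective _), hdeg]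
  -- coefficients of the reversed conjugate
  have hrev0 : (f.map conj').reverse.coeff 0 = conj' an := by
    rw [coeff_reverse, revAt_le (Nat.zero_le _), hmapdeg, Nat.sub_zero, coeff_map, ← han']
  have hrevn : (f.map conj').reverse.coeff n = conj' a0 := by
    rw [coeff_reverse, hmapdeg, revAt_le le_rfl, Nat.sub_self, coeff_map, ← ha0]
  -- g 0 = 0
  have hg0 : g.coeff 0 = 0 := by
    rw [hg, coeff_sub, coeff_C_mul, coeff_C_mul, hrev0]
    ring
  -- top coefficient of g
  have hgn : g.coeff n ≠ 0 := by
    rw [hg, coeff_sub, coeff_C_mul, coeff_C_mul, hrevn]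
    have h1 : conj' an * an = (Complex.normSq an : ℂ) := by
      rw [mul_comm, Complex.mul_conj]
    have h2 : a0 * conj' a0 = (Complex.normSq a0 : ℂ) := by
      rw [Complex.mul_conj]
    rw [h1, h2, sub_ne_zero]
    intro h3
    have h4 : Complex.normSq an = Complex.normSq a0 := by exact_mod_cast h3
    have h5 : ‖a0‖^2 < ‖an‖^2 := by
      have := norm_nonneg a0
      nlinarith
    rw [Complex.normSq_eq_norm_sq, Complex.normSq_eq_norm_sq] at h4
    nlinarith
  have hgne : g ≠ 0 := by
    intro h0
    rw [h0, coeff_zero] at hgn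
    exact hgn rfl
  have hgdeg : g.natDegree = n := by
    have hle : g.natDegree ≤ n := by
      apply le_trans (natDegree_sub_le _ _)
      apply max_le
      · exact le_trans (natDegree_C_mul_le _ _) hdeg.le
      · exact le_trans (natDegree_C_mul_le _ _)
          (le_trans (f.map conj').reverse_natDegree_le hmapdeg.le)
    exact le_antisymm hle (le_natDegree_of_ne_zero hgn)
  -- Part 1 : degree of divX g
  have hdivne : g.divX ≠ 0 := by
    intro h0
    rw [divX_eq_zero_iff] at h0
    rw [hg0, map_zero] at h0
    exact hgne h0
  have hdivdeg : g.divX.degree = ((n - 1 : ℕ) : WithBot ℕ) := by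
    rw [degree_eq_natDegree hdivne, natDegree_divX_eq_natDegree_tsub_one, hgdeg]
  refine ⟨hdivdeg, ?_⟩
  -- Part 2 : root counting
  have hXdiv : g = X * g.divX := by
    have := X_mul_divX_add g
    rw [hg0, map_zero, add_zero] at this
    exact this.symm
  have hrootsg : g.roots = 0 ::ₘ g.divX.roots := by
    nth_rewrite 1 [hXdiv]
    rw [roots_mul (by rw [← hXdiv]; exact hgne), roots_X]
    simp [Multiset.singleton_add]
  have hcount1 : Multiset.card (g.roots.filter (fun z => ‖z‖ < 1))
      = Multiset.card (g.divX.roots.filter (fun z => ‖z‖ < 1)) + 1 := by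
    rw [hrootsg, Multiset.filter_cons]
    simp only [norm_zero, zero_lt_one, if_pos]
    rw [Multiset.card_add]
    simp [add_comm]
  -- boundary factorization
  set B : Multiset ℂ := f.roots.filter (fun r => ‖r‖ = 1) with hB
  set B' : Multiset ℂ := f.roots.filter (fun r => ¬ ‖r‖ = 1) with hB'
  have hBadd : B + B' = f.roots := Multiset.filter_add_not _ _
  have hBmem : ∀ w ∈ B, ‖w‖ = 1 := fun w hw => (Multiset.mem_filter.mp hw).2
  have hB'mem : ∀ w ∈ B', ¬ ‖w‖ = 1 := fun w hw => (Multiset.mem_filter.mp hw).2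
  have hcard : Multiset.card f.roots = f.natDegree :=
    splits_iff_card_roots.mp (IsAlgClosed.splits f)
  have hlc : f.leadingCoeff = an := by rw [leadingCoeff, hdeg]
  set sB : Polynomial ℂ := (B.map (fun w => X - C w)).prod with hsB
  set ftil : Polynomial ℂ := C an * (B'.map (fun w => X - C w)).prod with hftil
  have hffac : f = sB * ftil := by
    have := C_leadingCoeff_mul_prod_multiset_X_sub_C hcard
    rw [hlc] at this
    rw [← this, ← hBadd, Multiset.map_add, Multiset.prod_add, hsB, hftil]
    ring
  have hftilne : ftil ≠ 0 := by
    intro h0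
    rw [hffac, h0, mul_zero] at hf0
    exact hf0 rfl
  have hsBne : sB ≠ 0 :=
    (monic_multiset_prod_of_monic B _ (fun i _ => monic_X_sub_C _)).ne_zero
  have hftilroots : ftil.roots = B' := by
    rw [hftil, roots_C_mul _ han, roots_multiset_prod_X_sub_C]
  have hftilsphere : ∀ z : ℂ, ‖z‖ = 1 → ftil.eval z ≠ 0 := by
    intro z hz h0
    have : z ∈ ftil.roots := (mem_roots hftilne).mpr h0
    rw [hftilroots] at this
    exact hB'mem z this hz
  -- reverse factorization
  set u : ℂ := (B.map (fun w => -conj' w)).prod with hu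
  have hmapfac : f.map conj' = (B.map (fun w => X - C (conj' w))).prod * (ftil.map conj') := by
    rw [hffac, Polynomial.map_mul, hsB, Polynomial.map_multiset_prod, Multiset.map_map]
    congr 1
    congr 1
    exact Multiset.map_congr rfl (fun w _ => by simp)
  have hftilmapne : ftil.map conj' ≠ 0 := by
    intro h0
    rw [Polynomial.map_eq_zero_iff (RingHom.injective _)] at h0
    exact hftilne h0
  have hrevfac : (f.map conj').reverse = C u * (sB * (ftil.map conj').reverse) := by
    rw [hmapfac]
    rw [rev_factor B hBmem _ hftilmapne]
  -- g = sB * gt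
  set gt : Polynomial ℂ := C (conj' an) * ftil - C (a0 * u) * (ftil.map conj').reverse
    with hgt
  have hgfac : g = sB * gt := by
    rw [hg, hgt, hrevfac, hffac]
    simp only [map_mul]
    ring
  -- Rouché application
  have hrou : Multiset.card (gt.roots.filter (fun r => ‖r‖ < 1))
      = Multiset.card ((C (conj' an) * ftil).roots.filter (fun r => ‖r‖ < 1)) := by
    apply rouche
    intro z hz
    rw [eval_mul, eval_mul, eval_C, eval_C, norm_mul, norm_mul, fstar_norm ftil hz,
      norm_mul, norm_prod_one B hBmem, mul_one, RCLike.norm_conj]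
    have hfz : 0 < ‖ftil.eval z‖ := norm_pos_iff.mpr (hftilsphere z hz)
    exact mul_lt_mul_of_pos_right hlt hfz
  have hgtroots : Multiset.card ((C (conj' an) * ftil).roots.filter (fun r => ‖r‖ < 1))
      = Multiset.card (B'.filter (fun r => ‖r‖ < 1)) := by
    rw [roots_C_mul _ (by simpa using han : conj' an ≠ 0), hftilroots]
  have hgtne : gt ≠ 0 := by
    intro h0
    rw [hgfac, h0, mul_zero] at hgne
    exact hgne rfl
  have hBfilter : B.filter (fun r => ‖r‖ < 1) = 0 := by
    rw [Multiset.filter_eq_nil]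
    intro w hw
    rw [hBmem w hw]
    exact lt_irrefl 1
  have hgroots2 : Multiset.card (g.roots.filter (fun r => ‖r‖ < 1))
      = Multiset.card (gt.roots.filter (fun r => ‖r‖ < 1)) := by
    have hrootsmul : g.roots = sB.roots + gt.roots := by
      rw [hgfac]
      exact roots_mul (by rw [← hgfac]; exact hgne)
    have hsBroots : sB.roots = B := roots_multiset_prod_X_sub_C B
    rw [hrootsmul, hsBroots, Multiset.filter_add, Multiset.card_add, hBfilter]
    simp
  have hfcount : Multiset.card (f.roots.filter (fun r => ‖r‖ < 1))
      = Multiset.card (B'.filter (fun r => ‖r‖ < 1)) := by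
    rw [← hBadd, Multiset.filter_add, Multiset.card_add, hBfilter]
    simp
  rw [← hcount1, hgroots2, hrou, hgtroots, ← hfcount]
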